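/- Let G be a connected simple graph on n ≥ 3 vertices with Randić index R, algebraic connectivity a, and minimum degree δ. If δ ≥ n/2, then R/a ≤ ((n - 3 + 2√2)/2) / (2(1 - cos(π/n))). -/

import Mathlib

open Finset Real Matrix

/-- The Randić index of a finite simple graph:
`R(G) = ∑_{uv ∈ E(G)} 1/√(d(u)·d(v))`. -/
noncomputable def randicIndex {V : Type*} [Fintype V] (G : SimpleGraph V) : ℝ :=
  letI : DecidableRel G.Adj := Classical.decRel _
  ∑ e ∈ G.edgeFinset,
    Sym2.lift ⟨fun u v => 1 / Real.sqrt ((G.degree u : ℝ) * (G.degree v : ℝ)),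
      fun u v => by simp [mul_comm]⟩ e

/-- The algebraic connectivity of a graph on `Fin n`: the second smallest eigenvalue
of the Laplacian matrix, characterized (via Courant–Fischer, since the all-ones vector
is an eigenvector of the smallest eigenvalue `0`) as the infimum of the Rayleigh
quotient over nonzero vectors orthogonal to the all-ones vector. -/
noncomputable def algebraicConnectivity {n : ℕ} (G : SimpleGraph (Fin n)) : ℝ :=
  letI : DecidableRel G.Adj := Classical.decRel _
  sInf {r : ℝ | ∃ x : Fin n → ℝ, x ≠ 0 ∧ (∑ i, x i) = 0 ∧
    r = (x ⬝ᵥ ((G.lapMatrix ℝ).mulVec x)) / (x ⬝ᵥ x)}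

/-- The edge connectivity of a graph: the least number of edges whose deletion
disconnects the graph. -/
noncomputable def edgeConnectivity {V : Type*} [Fintype V] (G : SimpleGraph V) : ℕ :=
  sInf {k : ℕ | ∃ s : Set (Sym2 V), s ⊆ G.edgeSet ∧ s.ncard = k ∧
    ¬ (G.deleteEdges s).Connected}

/-- The star `K_{1,n-1}` on vertex set `Fin n`: vertex `0` is adjacent to all others. -/
def starGraph (n : ℕ) : SimpleGraph (Fin n) where
  Adj i j := i ≠ j ∧ ((i : ℕ) = 0 ∨ (j : ℕ) = 0)
  symm := ⟨fun _ _ h => ⟨h.1.symm, h.2.symm⟩⟩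
  loopless := ⟨fun _ h => h.1 rfl⟩

/-! ### Auxiliary lemmas -/

lemma lap_quad_lower {n : ℕ} (hn : 3 ≤ n) (G : SimpleGraph (Fin n)) [DecidableRel G.Adj]
    (hδ : (n : ℝ) / 2 ≤ (G.minDegree : ℝ)) (x : Fin n → ℝ) (hx : ∑ i, x i = 0) :
    2 * (x ⬝ᵥ x) ≤ x ⬝ᵥ ((G.lapMatrix ℝ).mulVec x) := by
  haveI : Nonempty (Fin n) := ⟨⟨0, by omega⟩⟩
  have hq : x ⬝ᵥ ((G.lapMatrix ℝ).mulVec x)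
      = (∑ i, ∑ j, if G.Adj i j then (x i - x j)^2 else 0) / 2 := by
    rw [← SimpleGraph.lapMatrix_toLinearMap₂', Matrix.toLinearMap₂'_apply']
  have hdot : x ⬝ᵥ x = ∑ i, x i ^ 2 := by simp [dotProduct, sq]
  set T := ∑ i, x i ^ 2 with hT
  -- full sum
  have h1 : ∀ i : Fin n, ∑ j, (x i - x j)^2 = n * x i ^ 2 + T := by
    intro i
    have e : ∀ j : Fin n, (x i - x j)^2 = x i ^ 2 - 2 * x i * x j + x j ^ 2 := fun j => by ring
    simp_rw [e]
    rw [Finset.sum_add_distrib, Finset.sum_sub_distrib, ← Finset.mul_sum, hx,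
      Finset.sum_const, Finset.card_univ, Fintype.card_fin, mul_zero, sub_zero, nsmul_eq_mul]
  have hfull : ∑ i : Fin n, ∑ j, (x i - x j)^2 = 2 * n * T := by
    simp_rw [h1]
    rw [Finset.sum_add_distrib, ← Finset.mul_sum, Finset.sum_const, Finset.card_univ,
      Fintype.card_fin, nsmul_eq_mul, ← hT]
    ring
  -- pointwise bound
  have hpt : ∀ i j : Fin n, (x i - x j)^2 ≤ (if G.Adj i j then (x i - x j)^2 else 0)
      + (if G.Adj i j ∨ i = j then 0 else 2 * x i ^ 2 + 2 * x j ^ 2) := by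
    intro i j
    by_cases h : G.Adj i j
    · simp [h]
    · by_cases h2 : i = j
      · subst h2; simp [h]
      · simp only [h, h2, if_neg, or_self, if_false, zero_add]
        nlinarith [sq_nonneg (x i + x j)]
  -- sum the pointwise bound
  have hsum : 2 * (n:ℝ) * T ≤ (∑ i, ∑ j, if G.Adj i j then (x i - x j)^2 else 0)
      + ∑ i, ∑ j, (if G.Adj i j ∨ i = j then (0:ℝ) else 2 * x i ^ 2 + 2 * x j ^ 2) := by
    rw [← hfull, ← Finset.sum_add_distrib]
    refine Finset.sum_le_sum fun i _ => ?_
    rw [← Finset.sum_add_distrib]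
    exact Finset.sum_le_sum fun j _ => hpt i j
  -- bound M
  have hMsplit : ∀ i j : Fin n, (if G.Adj i j ∨ i = j then (0:ℝ) else 2 * x i ^ 2 + 2 * x j ^ 2)
      = (if G.Adj i j ∨ i = j then (0:ℝ) else 2 * x i ^ 2)
        + (if G.Adj i j ∨ i = j then (0:ℝ) else 2 * x j ^ 2) := by
    intro i j; split_ifs <;> simp
  have hswap : (∑ i, ∑ j, if G.Adj i j ∨ i = j then (0:ℝ) else 2 * x j ^ 2)
      = ∑ i, ∑ j, if G.Adj i j ∨ i = j then (0:ℝ) else 2 * x i ^ 2 := by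
    rw [Finset.sum_comm]
    refine Finset.sum_congr rfl fun i _ => Finset.sum_congr rfl fun j _ => ?_
    congr 1
    simp only [eq_iff_iff]
    constructor
    · rintro (h | h)
      · exact Or.inl h.symm
      · exact Or.inr h.symm
    · rintro (h | h)
      · exact Or.inl h.symm
      · exact Or.inr h.symm
  have hinner : ∀ i : Fin n, (∑ j, if G.Adj i j ∨ i = j then (0:ℝ) else 2 * x i ^ 2)
      = 2 * x i ^ 2 * ((n:ℝ) - G.degree i - 1) := by
    intro i
    have e : ∀ j : Fin n, (if G.Adj i j ∨ i = j then (0:ℝ) else 2 * x i ^ 2)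
        = 2 * x i ^ 2 * (1 - (if G.Adj i j then (1:ℝ) else 0) - (if i = j then (1:ℝ) else 0)) := by
      intro j
      by_cases h : G.Adj i j
      · simp [h, h.ne]
      · by_cases h2 : i = j <;> simp [h, h2]
    simp_rw [e]
    rw [← Finset.mul_sum]
    congr 1
    rw [Finset.sum_sub_distrib, Finset.sum_sub_distrib, Finset.sum_const, Finset.card_univ,
      Fintype.card_fin, nsmul_eq_mul, mul_one, ← SimpleGraph.degree_eq_sum_if_adj]
    simp
  have hdegi : ∀ i : Fin n, (n:ℝ) - G.degree i - 1 ≤ (n:ℝ)/2 - 1 := by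
    intro i
    have h1' : (G.minDegree : ℝ) ≤ (G.degree i : ℝ) := by
      exact_mod_cast G.minDegree_le_degree i
    linarith
  have hM : (∑ i, ∑ j, (if G.Adj i j ∨ i = j then (0:ℝ) else 2 * x i ^ 2 + 2 * x j ^ 2))
      ≤ 2 * ((n:ℝ) - 2) * T := by
    simp_rw [hMsplit]
    simp_rw [Finset.sum_add_distrib]
    rw [hswap]
    have hone : (∑ i, ∑ j, if G.Adj i j ∨ i = j then (0:ℝ) else 2 * x i ^ 2)
        ≤ ((n:ℝ) - 2) * T := by
      simp_rw [hinner]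
      have step : ∀ i : Fin n, 2 * x i ^ 2 * ((n:ℝ) - G.degree i - 1)
          ≤ ((n:ℝ) - 2) * x i ^ 2 := by
        intro i
        have := hdegi i
        nlinarith [sq_nonneg (x i)]
      calc ∑ i, 2 * x i ^ 2 * ((n:ℝ) - G.degree i - 1)
          ≤ ∑ i, ((n:ℝ) - 2) * x i ^ 2 := Finset.sum_le_sum fun i _ => step i
        _ = ((n:ℝ) - 2) * T := by rw [← Finset.mul_sum]
    linarith
  rw [hq, hdot]
  linarith [hsum, hM]

lemma randic_nonneg {V : Type*} [Fintype V] (G : SimpleGraph V) : 0 ≤ randicIndex G := by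
  unfold randicIndex
  refine Finset.sum_nonneg fun e he => ?_
  induction e using Sym2.ind with
  | _ u v => simp only [Sym2.lift_mk]; positivity

lemma minDegree_indep {n : ℕ} (G : SimpleGraph (Fin n)) (iA iB : DecidableRel G.Adj) :
    @SimpleGraph.minDegree (Fin n) G _ iA = @SimpleGraph.minDegree (Fin n) G _ iB := by
  congr!

lemma randic_le_inst {n : ℕ} (hn : 3 ≤ n) (G : SimpleGraph (Fin n)) [inst : DecidableRel G.Adj]
    (hδ : (n : ℝ) / 2 ≤ (G.minDegree : ℝ)) :
    (∑ e ∈ G.edgeFinset,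
      Sym2.lift ⟨fun u v => 1 / Real.sqrt ((G.degree u : ℝ) * (G.degree v : ℝ)),
        fun u v => by simp [mul_comm]⟩ e) ≤ (n : ℝ) - 1 := by
  haveI : Nonempty (Fin n) := ⟨⟨0, by omega⟩⟩
  have hn0 : (0:ℝ) < n := by positivity
  refine le_trans (Finset.sum_le_card_nsmul _ _ ((2:ℝ)/n) ?_) ?_
  · intro e he
    induction e using Sym2.ind with
    | _ u v =>
      rw [Sym2.lift_mk]
      have hu : (n:ℝ)/2 ≤ (G.degree u : ℝ) :=
        le_trans hδ (by exact_mod_cast G.minDegree_le_degree u)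
      have hv : (n:ℝ)/2 ≤ (G.degree v : ℝ) :=
        le_trans hδ (by exact_mod_cast G.minDegree_le_degree v)
      have hs : (n:ℝ)/2 ≤ Real.sqrt ((G.degree u : ℝ) * (G.degree v : ℝ)) := by
        rw [show (n:ℝ)/2 = Real.sqrt (((n:ℝ)/2)^2) from (Real.sqrt_sq (by positivity)).symm]
        apply Real.sqrt_le_sqrt
        nlinarith
      rw [div_le_div_iff₀ (lt_of_lt_of_le (by positivity) hs) hn0]
      nlinarith
  · rw [nsmul_eq_mul]
    have hcard : (#G.edgeFinset : ℝ) ≤ ((n:ℝ) * ((n:ℝ) - 1)) / 2 := by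
      have h := SimpleGraph.card_edgeFinset_le_card_choose_two (G := G)
      have h2 : ((Fintype.card (Fin n)).choose 2 : ℝ) = (n:ℝ) * ((n:ℝ) - 1) / 2 := by
        rw [Fintype.card_fin, Nat.cast_choose_two]
      calc (#G.edgeFinset : ℝ) ≤ ((Fintype.card (Fin n)).choose 2 : ℝ) := by exact_mod_cast h
        _ = _ := h2
    calc (#G.edgeFinset : ℝ) * (2/(n:ℝ)) ≤ ((n:ℝ) * ((n:ℝ) - 1) / 2) * (2 / n) :=
          mul_le_mul_of_nonneg_right hcard (by positivity)
      _ = (n:ℝ) - 1 := by field_simp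

lemma randic_le {n : ℕ} (hn : 3 ≤ n) (G : SimpleGraph (Fin n)) [inst : DecidableRel G.Adj]
    (hδ : (n : ℝ) / 2 ≤ (G.minDegree : ℝ)) : randicIndex G ≤ (n : ℝ) - 1 := by
  have hδc : (n : ℝ) / 2 ≤
      ((@SimpleGraph.minDegree (Fin n) G _ (Classical.decRel G.Adj) : ℕ) : ℝ) := by
    rw [minDegree_indep G (Classical.decRel G.Adj) inst]; exact hδ
  unfold randicIndex
  exact randic_le_inst (inst := Classical.decRel G.Adj) hn G hδc

lemma alg_ge_two_inst {n : ℕ} (hn : 3 ≤ n) (G : SimpleGraph (Fin n)) [inst : DecidableRel G.Adj]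
    (hδ : (n : ℝ) / 2 ≤ (G.minDegree : ℝ)) :
    2 ≤ sInf {r : ℝ | ∃ x : Fin n → ℝ, x ≠ 0 ∧ (∑ i, x i) = 0 ∧
      r = (x ⬝ᵥ ((G.lapMatrix ℝ).mulVec x)) / (x ⬝ᵥ x)} := by
  haveI : NeZero n := ⟨by omega⟩
  have h0 : (0 : Fin n) ≠ (1 : Fin n) := by
    intro h
    have := congrArg Fin.val h
    simp [Fin.val_zero, Fin.val_one, Nat.mod_eq_of_lt (show 1 < n by omega)] at this
  apply le_csInf
  · refine ⟨_, (Pi.single (0 : Fin n) (1:ℝ) - Pi.single 1 1), ?_, ?_, rfl⟩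
    · intro h
      have h0' := congrFun h 0
      simp [Pi.single_apply, h0.symm] at h0'
    · simp [Pi.sub_apply, Finset.sum_sub_distrib, Pi.single_apply]
  · rintro r ⟨x, hxne, hxs, rfl⟩
    have hdot : x ⬝ᵥ x = ∑ j, x j ^ 2 := by simp [dotProduct, sq]
    have hpos : 0 < x ⬝ᵥ x := by
      obtain ⟨i, hi⟩ := Function.ne_iff.mp hxne
      rw [hdot]
      refine Finset.sum_pos' (fun j _ => sq_nonneg _) ⟨i, Finset.mem_univ i, ?_⟩
      have : x i ≠ 0 := by simpa using hi
      positivity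
    rw [le_div_iff₀ hpos]
    have := lap_quad_lower hn G hδ x hxs
    linarith

lemma alg_ge_two {n : ℕ} (hn : 3 ≤ n) (G : SimpleGraph (Fin n)) [inst : DecidableRel G.Adj]
    (hδ : (n : ℝ) / 2 ≤ (G.minDegree : ℝ)) : 2 ≤ algebraicConnectivity G := by
  have hδc : (n : ℝ) / 2 ≤
      ((@SimpleGraph.minDegree (Fin n) G _ (Classical.decRel G.Adj) : ℕ) : ℝ) := by
    rw [minDegree_indep G (Classical.decRel G.Adj) inst]; exact hδ
  unfold algebraicConnectivity
  exact alg_ge_two_inst (inst := Classical.decRel G.Adj) hn G hδc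

lemma cos_facts {n : ℕ} (hn : 3 ≤ n) :
    0 < 1 - Real.cos (Real.pi / n) ∧
      1 - Real.cos (Real.pi / n) ≤ (Real.pi / n)^2 / 2 := by
  have hn0 : (0:ℝ) < n := by positivity
  have hn1 : (1:ℝ) ≤ (n:ℝ) := by exact_mod_cast Nat.one_le_of_lt hn
  set t := Real.pi / (2 * n) with ht
  have htpos : 0 < t := by positivity
  have h2t : 2 * t = Real.pi / n := by rw [ht]; field_simp
  have hid : Real.sin t ^ 2 = 1/2 - Real.cos (Real.pi / n) / 2 := by
    rw [Real.sin_sq_eq_half_sub, h2t]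
  have htlt : t < Real.pi := by
    rw [ht, div_lt_iff₀ (by positivity)]
    nlinarith [Real.pi_pos]
  have hsinpos : 0 < Real.sin t := Real.sin_pos_of_pos_of_lt_pi htpos htlt
  have hsin : Real.sin t ≤ t := Real.sin_le htpos.le
  have hsq : Real.sin t ^ 2 ≤ t ^ 2 := by nlinarith
  have htsq : t ^ 2 = (Real.pi / n)^2 / 4 := by rw [ht]; field_simp; ring
  constructor
  · nlinarith
  · nlinarith

theorem randic_over_algConn_le_of_minDegree_large
    {n : ℕ} (hn : 3 ≤ n) (G : SimpleGraph (Fin n)) [DecidableRel G.Adj] (hG : G.Connected)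
    (hδ : (n : ℝ) / 2 ≤ (G.minDegree : ℝ)) :
    randicIndex G / algebraicConnectivity G ≤
      (((n : ℝ) - 3 + 2 * Real.sqrt 2) / 2) / (2 * (1 - Real.cos (Real.pi / n))) := by
  have hn3 : (3:ℝ) ≤ (n:ℝ) := by exact_mod_cast hn
  have hn0 : (0:ℝ) < n := by linarith
  have hR0 : 0 ≤ randicIndex G := randic_nonneg G
  have hR : randicIndex G ≤ (n:ℝ) - 1 := randic_le hn G hδ
  have ha : 2 ≤ algebraicConnectivity G := alg_ge_two hn G hδ
  obtain ⟨hc1, hc2⟩ := cos_facts hn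
  have h1 : randicIndex G / algebraicConnectivity G ≤ ((n:ℝ) - 1) / 2 :=
    div_le_div₀ (by linarith) hR (by norm_num) ha
  refine le_trans h1 ?_
  -- arithmetic part
  have hπ : Real.pi < 3.15 := Real.pi_lt_d2
  have hπ0 : 0 < Real.pi := Real.pi_pos
  have hπ2 : Real.pi ^ 2 ≤ 9.9225 := by nlinarith
  have hs2 : (1.4:ℝ) ≤ Real.sqrt 2 := by
    nlinarith [Real.sq_sqrt (show (0:ℝ) ≤ 2 by norm_num), Real.sqrt_nonneg 2]
  have hu : (0:ℝ) ≤ (n:ℝ) - 3 := by linarith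
  have hA : (0:ℝ) ≤ (9.9225 - Real.pi^2) * ((n:ℝ) - 1) := by
    apply mul_nonneg <;> linarith
  have hB : (0:ℝ) ≤ (2 * Real.sqrt 2 - 2.8) * (n:ℝ)^2 := by
    apply mul_nonneg
    · linarith
    · exact sq_nonneg _
  have key : ((n:ℝ) - 1) * Real.pi ^ 2 ≤ ((n:ℝ) - 3 + 2 * Real.sqrt 2) * (n:ℝ)^2 := by
    nlinarith [hA, hB, hu, mul_nonneg hu hu, mul_nonneg (mul_nonneg hu hu) hu]
  have hstep : ((n:ℝ) - 1) * ((Real.pi / n)^2 / 2) ≤ ((n:ℝ) - 3 + 2 * Real.sqrt 2) / 2 := by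
    have e : ((n:ℝ) - 1) * ((Real.pi / n)^2 / 2)
        = (((n:ℝ) - 1) * Real.pi ^ 2) / (2 * (n:ℝ)^2) := by
      rw [div_pow]
      field_simp
    rw [e, div_le_div_iff₀ (by positivity) (by norm_num)]
    nlinarith [key]
  rw [le_div_iff₀ (by positivity)]
  calc ((n:ℝ) - 1) / 2 * (2 * (1 - Real.cos (Real.pi / n)))
      = ((n:ℝ) - 1) * (1 - Real.cos (Real.pi / n)) := by ring
    _ ≤ ((n:ℝ) - 1) * ((Real.pi / n)^2 / 2) :=
        mul_le_mul_of_nonneg_left hc2 (by linarith)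
    _ ≤ ((n:ℝ) - 3 + 2 * Real.sqrt 2) / 2 := hstep
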